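/- Let (a_i, b_i), i = 1, ..., t, be the pairs of a Skolem sequence of order t, and let c ≥ t be a positive integer. Then the values appearing among the triples (0, i, b_i + c), 1 ≤ i ≤ t, are all distinct apart from 0 and lie in {0} ∪ {1,...,t} ∪ {c+2,...,c+2t}, and the multiset of induced differences {i : 1 ≤ i ≤ t} ∪ {(b_i + c) − i : 1 ≤ i ≤ t} ∪ {b_i + c : 1 ≤ i ≤ t} is exactly the set {1,...,t} ∪ {c+1,...,c+2t}, each element occurring exactly once. -/

import Mathlib

/-- Let `(aᵢ, bᵢ)`, `i = 1, …, t`, be the pairs of a Skolem sequence of order `t`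
(so `bᵢ = aᵢ + i` and the entries partition `{1, …, 2t}`), and let `c ≥ t` be a positive
integer.  Then the nonzero values appearing among the triples `(0, i, bᵢ + c)` are all
distinct and lie in `{1, …, t} ∪ {c+2, …, c+2t}`, and the multiset of induced differences
`{i} ∪ {(bᵢ + c) − i} ∪ {bᵢ + c}` is exactly `{1, …, t} ∪ {c+1, …, c+2t}`, each element
occurring exactly once. -/
theorem skolem_triple_labels' (t c : ℕ) (a b : ℕ → ℕ) (hc : 1 ≤ c) (htc : t ≤ c)
    (hab : ∀ i ∈ Finset.Icc 1 t, b i = a i + i)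
    (hpart : Set.BijOn (fun p : ℕ × Bool => if p.2 then b p.1 else a p.1)
      ↑((Finset.Icc 1 t) ×ˢ (Finset.univ : Finset Bool)) ↑(Finset.Icc 1 (2 * t))) :
    (Set.InjOn (fun p : ℕ × Bool => if p.2 then b p.1 + c else p.1)
        ↑((Finset.Icc 1 t) ×ˢ (Finset.univ : Finset Bool)) ∧
      Set.MapsTo (fun p : ℕ × Bool => if p.2 then b p.1 + c else p.1)
        ↑((Finset.Icc 1 t) ×ˢ (Finset.univ : Finset Bool))
        ↑(Finset.Icc 1 t ∪ Finset.Icc (c + 2) (c + 2 * t))) ∧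
    (Finset.Icc 1 t).val.map (fun i => i) +
      (Finset.Icc 1 t).val.map (fun i => b i + c - i) +
      (Finset.Icc 1 t).val.map (fun i => b i + c) =
      (Finset.Icc 1 t ∪ Finset.Icc (c + 1) (c + 2 * t)).val := by
  -- membership facts
  have hmem : ∀ i ∈ Finset.Icc 1 t, ∀ v : Bool,
      ((i, v) : ℕ × Bool) ∈ (↑((Finset.Icc 1 t) ×ˢ (Finset.univ : Finset Bool)) : Set (ℕ × Bool)) := by
    intro i hi v
    simp only [Finset.coe_product, Set.mem_prod, Finset.mem_coe]
    exact ⟨hi, Finset.mem_univ v⟩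
  have ha_bd : ∀ i ∈ Finset.Icc 1 t, 1 ≤ a i ∧ a i ≤ 2 * t := by
    intro i hi
    have := hpart.mapsTo (hmem i hi false)
    simpa using this
  have hb_bd : ∀ i ∈ Finset.Icc 1 t, 1 ≤ b i ∧ b i ≤ 2 * t := by
    intro i hi
    have := hpart.mapsTo (hmem i hi true)
    simpa using this
  have hb2 : ∀ i ∈ Finset.Icc 1 t, 2 ≤ b i := by
    intro i hi
    have h1 := (ha_bd i hi).1
    have h2 := hab i hi
    have : 1 ≤ i := (Finset.mem_Icc.1 hi).1
    omega
  have hbinj : ∀ i ∈ Finset.Icc 1 t, ∀ j ∈ Finset.Icc 1 t, b i = b j → i = j := by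
    intro i hi j hj h
    have := hpart.injOn (hmem i hi true) (hmem j hj true) (by simpa using h)
    exact (Prod.ext_iff.1 this).1
  have hainj : ∀ i ∈ Finset.Icc 1 t, ∀ j ∈ Finset.Icc 1 t, a i = a j → i = j := by
    intro i hi j hj h
    have := hpart.injOn (hmem i hi false) (hmem j hj false) (by simpa using h)
    exact (Prod.ext_iff.1 this).1
  have habne : ∀ i ∈ Finset.Icc 1 t, ∀ j ∈ Finset.Icc 1 t, a i ≠ b j := by
    intro i hi j hj h
    have := hpart.injOn (hmem i hi false) (hmem j hj true) (by simpa using h)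
    exact Bool.false_ne_true (Prod.ext_iff.1 this).2
  constructor
  · constructor
    · -- InjOn
      intro p hp q hq h
      simp only [Finset.coe_product, Set.mem_prod, Finset.mem_coe] at hp hq
      have hp1 := hp.1; have hq1 := hq.1
      have hp1' := Finset.mem_Icc.1 hp1
      have hq1' := Finset.mem_Icc.1 hq1
      obtain ⟨i, u⟩ := p
      obtain ⟨j, v⟩ := q
      simp only at hp1 hq1 hp1' hq1'
      cases u <;> cases v <;> simp only [Bool.false_eq_true, if_false, if_true] at h ⊢
      · exact Prod.ext h rfl
      · have := hb2 j hq1; omega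
      · have := hb2 i hp1; omega
      · exact Prod.ext (hbinj i hp1 j hq1 (by omega)) rfl
    · -- MapsTo
      intro p hp
      simp only [Finset.coe_product, Set.mem_prod, Finset.mem_coe] at hp
      have hp1 := hp.1
      simp only [Finset.coe_union, Set.mem_union, Finset.mem_coe, Finset.mem_Icc]
      obtain ⟨i, v⟩ := p
      simp only at hp1
      cases v
      · left; simpa using Finset.mem_Icc.1 hp1
      · right
        have h1 := hb2 i hp1
        have h2 := (hb_bd i hp1).2
        simp only [if_true]
        omega
  · -- multiset part
    -- key: map a + map b = Icc 1 (2t)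
    have snd : (Finset.Icc 1 t).val.Nodup := (Finset.Icc 1 t).nodup
    have key : (Finset.Icc 1 t).val.map a + (Finset.Icc 1 t).val.map b
        = (Finset.Icc 1 (2 * t)).val := by
      apply Multiset.eq_of_le_of_card_le
      · rw [Multiset.le_iff_subset]
        · intro x hx
          rcases Multiset.mem_add.1 hx with h | h <;>
            obtain ⟨i, hi, rfl⟩ := Multiset.mem_map.1 h
          · have := ha_bd i hi
            simp only [Finset.mem_val, Finset.mem_Icc]; omega
          · have := hb_bd i hi
            simp only [Finset.mem_val, Finset.mem_Icc]; omega
        · rw [Multiset.nodup_add]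
          refine ⟨Multiset.Nodup.map_on (fun x hx y hy h => hainj x hx y hy h) snd,
            Multiset.Nodup.map_on (fun x hx y hy h => hbinj x hx y hy h) snd, ?_⟩
          rw [Multiset.disjoint_left]
          intro x hx hy
          obtain ⟨i, hi, rfl⟩ := Multiset.mem_map.1 hx
          obtain ⟨j, hj, hji⟩ := Multiset.mem_map.1 hy
          exact habne i hi j hj hji.symm
      · simp [Nat.card_Icc]; omega
    have hdisj : Disjoint (Finset.Icc 1 t) (Finset.Icc (c + 1) (c + 2 * t)) := by
      rw [Finset.disjoint_left]
      intro x hx hy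
      rw [Finset.mem_Icc] at hx hy; omega
    rw [← Finset.disjUnion_eq_union _ _ hdisj]
    show _ = (Finset.Icc 1 t).val + (Finset.Icc (c + 1) (c + 2 * t)).val
    have h1 : (Finset.Icc 1 t).val.map (fun i => i) = (Finset.Icc 1 t).val :=
      Multiset.map_id _
    have h2 : (Finset.Icc 1 t).val.map (fun i => b i + c - i)
        = (Finset.Icc 1 t).val.map (fun i => a i + c) := by
      apply Multiset.map_congr rfl
      intro i hi
      have := hab i hi
      have := (Finset.mem_Icc.1 (show i ∈ Finset.Icc 1 t from hi)).1
      omega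
    rw [h1, h2, add_assoc]
    congr 1
    have h3 : (Finset.Icc 1 t).val.map (fun i => a i + c)
          + (Finset.Icc 1 t).val.map (fun i => b i + c)
        = ((Finset.Icc 1 t).val.map a + (Finset.Icc 1 t).val.map b).map (· + c) := by
      simp [Multiset.map_map, Function.comp]
    rw [h3, key]
    have h4 : (Finset.Icc (c + 1) (c + 2 * t)) = Finset.map (addRightEmbedding c) (Finset.Icc 1 (2 * t)) := by
      rw [Finset.map_add_right_Icc]
      congr 1 <;> omega
    rw [h4, Finset.map_val]
    rfl
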